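/- Let u⁺, u⁻ ∈ L²(ℝ³;ℂ) and set u = conj(u⁺) + conj(u⁻), v = conj(u⁺) − conj(u⁻), and Φ = (u, −iv) ∈ L²(ℝ³;ℂ²). Suppose c ∈ ℂ satisfies c·(σ₁ conj(Φ), Φ) = 1. For a scalar φ ∈ L²(ℝ³;ℂ) set [φ] = (Re φ, Im φ), P[φ] = c (σ₁ conj(Φ), [φ]) Φ + conj(c) (σ₁ Φ, [φ]) conj(Φ), and α = 2c (σ₁ conj(Φ), [φ]). Then: (i) α = −2c i [ (u⁺, φ) − (u⁻, conj(φ)) ]; (ii) P[φ] equals the componentwise real part of αΦ, i.e. P[φ] = ( Re(αu), Re(−iαv) ), and as a scalar function (first component plus i times second component) P[φ] corresponds to α·conj(u⁺) + conj(α)·u⁻; (iii) if moreover Φ and conj(Φ) are linearly independent over ℂ, then P[φ] = 0 if and only if (u⁺, φ) = (u⁻, conj(φ)); (iv) under the same independence hypothesis, with σ₃(f₁,f₂) = (f₁,−f₂) and P^♯[φ] = −c (σ₁σ₃ conj(Φ), [φ]) σ₃Φ − conj(c) (σ₁σ₃ Φ, [φ]) σ₃ conj(Φ), one has P^♯[φ]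 = 0 if and only if (u⁺, conj(φ)) = (u⁻, φ). -/

import Mathlib

open MeasureTheory

noncomputable section

/-- The `L²(ℝ³;ℂ)` inner product `(f,g) = ∫ conj(f) g`, conjugate-linear in the first
argument. -/
def ip (f g : EuclideanSpace ℝ (Fin 3) → ℂ) : ℂ :=
  ∫ x, (starRingEnd ℂ) (f x) * g x

/-- The `L²(ℝ³;ℂ²)` inner product, the sum of the componentwise inner products. -/
def ip2 (f g : EuclideanSpace ℝ (Fin 3) → ℂ × ℂ) : ℂ :=
  ∫ x, ((starRingEnd ℂ) (f x).1 * (g x).1 + (starRingEnd ℂ) (f x).2 * (g x).2)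

/-- Componentwise complex conjugation. -/
def conj2 (f : EuclideanSpace ℝ (Fin 3) → ℂ × ℂ) : EuclideanSpace ℝ (Fin 3) → ℂ × ℂ :=
  fun x => ((starRingEnd ℂ) (f x).1, (starRingEnd ℂ) (f x).2)

/-- The Pauli matrix `σ₁`, swapping the two components. -/
def sig1 (f : EuclideanSpace ℝ (Fin 3) → ℂ × ℂ) : EuclideanSpace ℝ (Fin 3) → ℂ × ℂ :=
  fun x => ((f x).2, (f x).1)

/-- The Pauli matrix `σ₃`: `σ₃(f₁,f₂) = (f₁,−f₂)`. -/
def sig3 (f : EuclideanSpace ℝ (Fin 3) → ℂ × ℂ) : EuclideanSpace ℝ (Fin 3) → ℂ × ℂ :=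
  fun x => ((f x).1, -(f x).2)

/-- The real vector `[φ] = (Re φ, Im φ)` attached to a scalar `φ`. -/
def vecOf (φ : EuclideanSpace ℝ (Fin 3) → ℂ) : EuclideanSpace ℝ (Fin 3) → ℂ × ℂ :=
  fun x => (((φ x).re : ℂ), ((φ x).im : ℂ))


private lemma memLp_conj' {f : EuclideanSpace ℝ (Fin 3) → ℂ} (hf : MemLp f 2 volume) :
    MemLp (fun x => (starRingEnd ℂ) (f x)) 2 volume :=
  ⟨RCLike.continuous_conj.comp_aestronglyMeasurable hf.1, by
    have h : eLpNorm (fun x => (starRingEnd ℂ) (f x)) 2 volume = eLpNorm f 2 volume :=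
      eLpNorm_congr_norm_ae (Filter.Eventually.of_forall fun x => by simp)
    rw [h]; exact hf.2⟩

private lemma integrable_mul2 {f g : EuclideanSpace ℝ (Fin 3) → ℂ}
    (hf : MemLp f 2 volume) (hg : MemLp g 2 volume) :
    Integrable (fun x => f x * g x) volume := by
  have : ENNReal.HolderTriple 2 2 1 := ⟨by simp [one_div, ENNReal.inv_two_add_inv_two]⟩
  have h := hg.smul (r := 1) hf
  exact (memLp_one_iff_integrable.mp h).congr
    (Filter.Eventually.of_forall fun x => by simp [smul_eq_mul])

private lemma key1 (p q a : ℂ) :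
    -Complex.I * (p - q) * ((a.re : ℝ) : ℂ) + (p + q) * ((a.im : ℝ) : ℂ)
      = -Complex.I * (p * a - q * (starRingEnd ℂ) a) := by
  linear_combination (norm := (push_cast; ring1)) (Complex.I*(p-q)/2) * (Complex.add_conj a)
    + (Complex.I*(p+q)/2) * (Complex.sub_conj a)
    + (((a.im : ℝ) : ℂ)*(p+q)) * Complex.I_sq

private lemma key2 (p q a : ℂ) :
    Complex.I * (p - q) * ((a.re : ℝ) : ℂ) + (p + q) * ((a.im : ℝ) : ℂ)
      = Complex.I * (p * (starRingEnd ℂ) a - q * a) := by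
  linear_combination (norm := (push_cast; ring1)) (-(Complex.I*(p-q)/2)) * (Complex.add_conj a)
    + (Complex.I*(p+q)/2) * (Complex.sub_conj a)
    + (((a.im : ℝ) : ℂ)*(p+q)) * Complex.I_sq

private lemma keyre (c A t : ℂ) :
    c * A * t + (starRingEnd ℂ) c * (starRingEnd ℂ) A * (starRingEnd ℂ) t
      = (((2*(c*A)*t).re : ℝ) : ℂ) := by
  have h := Complex.add_conj (2*(c*A)*t)
  simp only [map_mul, map_ofNat] at h
  push_cast at h
  linear_combination h/2

private lemma re_ofReal' (z : ℂ) : ((z.re : ℝ) : ℂ) = (z + (starRingEnd ℂ) z)/2 := by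
  have h := Complex.add_conj z
  push_cast at h
  linear_combination (-1/2 : ℂ) * h
/-- Lemma 2.6 (projection formulas onto the eigenspaces of the linearized operator):
with `u = conj(u⁺)+conj(u⁻)`, `v = conj(u⁺)−conj(u⁻)`, `Φ = (u,−iv)`,
`c (σ₁ conj Φ, Φ) = 1`, `α = 2c(σ₁ conj Φ, [φ])` and
`P[φ] = c(σ₁ conj Φ,[φ])Φ + conj(c)(σ₁Φ,[φ])conj(Φ)`:
(i) `α = −2ci[(u⁺,φ) − (u⁻,conj φ)]`;
(ii) `P[φ] = (Re(αu), Re(−iαv))`, and as a scalar `P[φ] = α conj(u⁺) + conj(α) u⁻`;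
(iii) if `Φ, conj Φ` are linearly independent over `ℂ` then
`P[φ] = 0 ↔ (u⁺,φ) = (u⁻,conj φ)`;
(iv) likewise `P^♯[φ] = 0 ↔ (u⁺,conj φ) = (u⁻,φ)`. -/
theorem stmt11 (up um φ : EuclideanSpace ℝ (Fin 3) → ℂ)
    (hup : MemLp up 2 volume) (hum : MemLp um 2 volume) (hφ : MemLp φ 2 volume)
    (u v : EuclideanSpace ℝ (Fin 3) → ℂ)
    (hu : ∀ x, u x = (starRingEnd ℂ) (up x) + (starRingEnd ℂ) (um x))
    (hv : ∀ x, v x = (starRingEnd ℂ) (up x) - (starRingEnd ℂ) (um x))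
    (Φ : EuclideanSpace ℝ (Fin 3) → ℂ × ℂ)
    (hΦ : ∀ x, Φ x = (u x, -Complex.I * v x))
    (c : ℂ) (hc : c * ip2 (sig1 (conj2 Φ)) Φ = 1)
    (α : ℂ) (hα : α = 2 * c * ip2 (sig1 (conj2 Φ)) (vecOf φ))
    (P : EuclideanSpace ℝ (Fin 3) → ℂ × ℂ)
    (hP : ∀ x, P x = (c * ip2 (sig1 (conj2 Φ)) (vecOf φ)) • Φ x
      + ((starRingEnd ℂ) c * ip2 (sig1 Φ) (vecOf φ)) • conj2 Φ x)
    (Psharp : EuclideanSpace ℝ (Fin 3) → ℂ × ℂ)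
    (hPsharp : ∀ x, Psharp x =
      (-(c * ip2 (sig1 (sig3 (conj2 Φ))) (vecOf φ))) • sig3 Φ x
        + (-((starRingEnd ℂ) c * ip2 (sig1 (sig3 Φ)) (vecOf φ))) • sig3 (conj2 Φ) x) :
    -- (i)
    (α = -2 * c * Complex.I *
        (ip up φ - ip um (fun x => (starRingEnd ℂ) (φ x)))) ∧
    -- (ii) componentwise real part of `αΦ`
    (∀ x, P x = ((((α * u x).re : ℝ) : ℂ), (((-Complex.I * α * v x).re : ℝ) : ℂ))) ∧
    -- (ii) as a scalar function
    (∀ x, (P x).1 + Complex.I * (P x).2 =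
        α * (starRingEnd ℂ) (up x) + (starRingEnd ℂ) α * um x) ∧
    -- (iii)
    (LinearIndependent ℂ ![Φ, conj2 Φ] →
      ((∀ x, P x = 0) ↔ ip up φ = ip um (fun x => (starRingEnd ℂ) (φ x)))) ∧
    -- (iv)
    (LinearIndependent ℂ ![Φ, conj2 Φ] →
      ((∀ x, Psharp x = 0) ↔ ip up (fun x => (starRingEnd ℂ) (φ x)) = ip um φ)) := by
  have hupc := memLp_conj' hup
  have humc := memLp_conj' hum
  have hφc := memLp_conj' hφ
  have i1 : Integrable (fun x => (starRingEnd ℂ) (up x) * φ x) volume :=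
    integrable_mul2 hupc hφ
  have i2 : Integrable (fun x => (starRingEnd ℂ) (um x) * (starRingEnd ℂ) (φ x)) volume :=
    integrable_mul2 humc hφc
  have i3 : Integrable (fun x => (starRingEnd ℂ) (up x) * (starRingEnd ℂ) (φ x)) volume :=
    integrable_mul2 hupc hφc
  have i4 : Integrable (fun x => (starRingEnd ℂ) (um x) * φ x) volume :=
    integrable_mul2 humc hφ
  set A := ip2 (sig1 (conj2 Φ)) (vecOf φ) with hAdef
  set B := ip2 (sig1 Φ) (vecOf φ) with hBdef
  set A' := ip2 (sig1 (sig3 (conj2 Φ))) (vecOf φ) with hA'def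
  set B' := ip2 (sig1 (sig3 Φ)) (vecOf φ) with hB'def
  have hc0 : c ≠ 0 := left_ne_zero_of_mul_eq_one hc
  have hA : A = -Complex.I * (ip up φ - ip um (fun x => (starRingEnd ℂ) (φ x))) := by
    have step1 : A = ∫ x, -Complex.I * ((starRingEnd ℂ) (up x) * φ x
        - (starRingEnd ℂ) (um x) * (starRingEnd ℂ) (φ x)) := by
      rw [hAdef]
      unfold ip2
      apply integral_congr_ae
      filter_upwards with x
      simp only [sig1, conj2, vecOf, hΦ x, hu x, hv x, Complex.conj_conj]
      exact key1 _ _ _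
    rw [step1, integral_const_mul, integral_sub i1 i2]
    rfl
  have hB : B = (starRingEnd ℂ) A := by
    rw [hAdef, hBdef]
    unfold ip2
    rw [← integral_conj]
    apply integral_congr_ae
    filter_upwards with x
    simp [sig1, conj2, vecOf, Complex.conj_conj, Complex.conj_ofReal, map_add, map_mul]
  have hA' : A' = Complex.I *
      (ip up (fun x => (starRingEnd ℂ) (φ x)) - ip um φ) := by
    have step1 : A' = ∫ x, Complex.I * ((starRingEnd ℂ) (up x) * (starRingEnd ℂ) (φ x)
        - (starRingEnd ℂ) (um x) * φ x) := by
      rw [hA'def]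
      unfold ip2
      apply integral_congr_ae
      filter_upwards with x
      simp only [sig1, sig3, conj2, vecOf, hΦ x, hu x, hv x, Complex.conj_conj, map_neg,
        neg_neg]
      linear_combination key2 ((starRingEnd ℂ) (up x)) ((starRingEnd ℂ) (um x)) (φ x)
    rw [step1, integral_const_mul, integral_sub i3 i4]
    rfl
  have hB' : B' = (starRingEnd ℂ) A' := by
    rw [hA'def, hB'def]
    unfold ip2
    rw [← integral_conj]
    apply integral_congr_ae
    filter_upwards with x
    simp [sig1, sig3, conj2, vecOf, Complex.conj_conj, Complex.conj_ofReal, map_add, map_mul,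
      map_neg]
  have part1 : α = -2 * c * Complex.I *
      (ip up φ - ip um (fun x => (starRingEnd ℂ) (φ x))) := by
    rw [hα, hA]; ring
  have part2 : ∀ x, P x = ((((α * u x).re : ℝ) : ℂ),
      (((-Complex.I * α * v x).re : ℝ) : ℂ)) := by
    intro x
    have hCx : conj2 Φ x = ((starRingEnd ℂ) (u x), (starRingEnd ℂ) (-Complex.I * v x)) := by
      simp [conj2, hΦ x]
    rw [hP x, hΦ x, hCx, hB]
    simp only [Prod.smul_mk, Prod.mk_add_mk, smul_eq_mul, Prod.mk.injEq]
    constructor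
    · rw [show α * u x = 2*(c*A)*(u x) by rw [hα]; ring]
      exact keyre c A (u x)
    · rw [show -Complex.I * α * v x = 2*(c*A)*(-Complex.I * v x) by rw [hα]; ring]
      exact keyre c A _
  have part3 : ∀ x, (P x).1 + Complex.I * (P x).2 =
      α * (starRingEnd ℂ) (up x) + (starRingEnd ℂ) α * um x := by
    intro x
    rw [part2 x]
    dsimp only
    rw [re_ofReal', re_ofReal', hu x, hv x]
    simp only [map_mul, map_add, map_sub, map_neg, Complex.conj_conj, Complex.conj_I]
    linear_combination (((starRingEnd ℂ) α * (up x - um x)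
      - α * ((starRingEnd ℂ) (up x) - (starRingEnd ℂ) (um x)))/2) * Complex.I_sq
  refine ⟨part1, part2, part3, ?_, ?_⟩
  · intro hLI
    constructor
    · intro hz
      have hfun : (c * A) • Φ + ((starRingEnd ℂ) c * (starRingEnd ℂ) A) • conj2 Φ = 0 := by
        funext x
        have h0 := hz x
        rw [hP x, hB] at h0
        simpa [Pi.add_apply, Pi.smul_apply, Pi.zero_apply] using h0
      obtain ⟨h1, -⟩ := LinearIndependent.pair_iff.mp hLI _ _ hfun
      have hA0 : A = 0 := by
        rcases mul_eq_zero.mp h1 with h | h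
        · exact absurd h hc0
        · exact h
      rw [hA] at hA0
      rcases mul_eq_zero.mp hA0 with h | h
      · exact absurd h (neg_ne_zero.mpr Complex.I_ne_zero)
      · exact sub_eq_zero.mp h
    · intro heq x
      have hA0 : A = 0 := by rw [hA, heq, sub_self, mul_zero]
      rw [hP x, hB, hA0]
      simp
  · intro hLI
    constructor
    · intro hz
      have hfun : (-(c * A')) • Φ
          + (-((starRingEnd ℂ) c * (starRingEnd ℂ) A')) • conj2 Φ = 0 := by
        funext x
        have h0 := hz x
        rw [hPsharp x, hB'] at h0
        rw [Prod.ext_iff] at h0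
        obtain ⟨h1, h2⟩ := h0
        simp only [sig3, conj2, Prod.fst_add, Prod.snd_add, Prod.smul_fst, Prod.smul_snd,
          smul_eq_mul, Prod.fst_zero, Prod.snd_zero] at h1 h2
        simp only [Pi.add_apply, Pi.smul_apply, Pi.zero_apply, Prod.ext_iff, Prod.fst_add,
          Prod.snd_add, Prod.smul_fst, Prod.smul_snd, smul_eq_mul, Prod.fst_zero,
          Prod.snd_zero, conj2]
        constructor
        · linear_combination h1
        · linear_combination -h2
      obtain ⟨h1, -⟩ := LinearIndependent.pair_iff.mp hLI _ _ hfun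
      have hA0 : A' = 0 := by
        rcases mul_eq_zero.mp (neg_eq_zero.mp h1) with h | h
        · exact absurd h hc0
        · exact h
      rw [hA'] at hA0
      rcases mul_eq_zero.mp hA0 with h | h
      · exact absurd h Complex.I_ne_zero
      · exact sub_eq_zero.mp h
    · intro heq x
      have hA0 : A' = 0 := by rw [hA', heq, sub_self, mul_zero]
      rw [hPsharp x, hB', hA0]
      simp

end
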